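/- Assume: (i) C is conditionally independent of the pair (T*, X) given σ(Z); (ii) there are measurable functions I, J : E → ℝ such that E[1{T* ≥ t} | σ(X, Z)] = exp(−X·I(Z) − J(Z)) almost surely (in the multiplicative hazards model 𝐡_s(X, Z) = (X·θ_s + 1)·φ_s(Z) one has I(Z) = ∫₀ᵗ θ_s·φ_s(Z) ds and J(Z) = ∫₀ᵗ φ_s(Z) ds); (iii) π₀ : E → ℝ is measurable with π₀(Z) = E[X | σ(Z)] almost surely; (iv) E[1{C ≥ t} | σ(Z)] > 0 almost surely. Then almost surely E[1{T ≥ t} | σ(Z)] > 0 and E[X·1{T ≥ t} | σ(Z)] / E[1{T ≥ t} | σ(Z)] = π₀(Z) / ( π₀(Z) + (1 − π₀(Z))·exp(I(Z)) ). -/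

import Mathlib

open MeasureTheory ProbabilityTheory

noncomputable section

/-- The real-valued indicator of the event `{t ≤ V}` (at-risk indicator at time `t`). -/
def indGE {Ω : Type*} (V : Ω → ℝ) (t : ℝ) : Ω → ℝ :=
  ({ω | t ≤ V ω}).indicator fun _ => 1

end

/-- **Predictable projection for a binary exposure in a multiplicative hazards model.**
If `C ⫫ (T*, X) | σ(Z)`, the conditional survival function of `T*` given `(X, Z)` is
`exp (−X·I(Z) − J(Z))`, `π₀(Z) = E[X | σ(Z)]` and `E[1{C ≥ t} | σ(Z)] > 0` a.s., then,
with `T = min (T*, C)`, a.s. `E[1{T ≥ t} | σ(Z)] > 0` and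
`E[X·1{T ≥ t} | σ(Z)] / E[1{T ≥ t} | σ(Z)] = π₀(Z) / (π₀(Z) + (1 − π₀(Z))·exp (I(Z)))`. -/
theorem binary_predictable_projection
    {Ω E : Type*} [mΩ : MeasurableSpace Ω] [StandardBorelSpace Ω]
    [MeasurableSpace E]
    (P : Measure Ω) [IsProbabilityMeasure P]
    (Z : Ω → E) (X Tstar C : Ω → ℝ)
    (hZ : Measurable Z) (hX : Measurable X) (hTstar : Measurable Tstar)
    (hC : Measurable C)
    (hXbin : ∀ ω, X ω = 0 ∨ X ω = 1)
    (t : ℝ)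
    (hm' : MeasurableSpace.comap Z inferInstance ≤ mΩ)
    (hci : CondIndepFun (MeasurableSpace.comap Z inferInstance) hm'
      C (fun ω => (Tstar ω, X ω)) P)
    (I J : E → ℝ) (hI : Measurable I) (hJ : Measurable J)
    (hsurv : P[indGE Tstar t|MeasurableSpace.comap (fun ω => (X ω, Z ω)) inferInstance]
      =ᵐ[P] fun ω => Real.exp (-(X ω * I (Z ω)) - J (Z ω)))
    (π₀ : E → ℝ) (hπ₀ : Measurable π₀)
    (hπ₀eq : (fun ω => π₀ (Z ω)) =ᵐ[P] P[X|MeasurableSpace.comap Z inferInstance])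
    (hcens : ∀ᵐ ω ∂P,
      0 < (P[indGE C t|MeasurableSpace.comap Z inferInstance]) ω) :
    ∀ᵐ ω ∂P,
      0 < (P[indGE (fun ω' => min (Tstar ω') (C ω')) t|
          MeasurableSpace.comap Z inferInstance]) ω ∧
      (P[fun ω' => X ω' * indGE (fun ω'' => min (Tstar ω'') (C ω'')) t ω'|
          MeasurableSpace.comap Z inferInstance]) ω /
        (P[indGE (fun ω' => min (Tstar ω') (C ω')) t|
          MeasurableSpace.comap Z inferInstance]) ω
      = π₀ (Z ω) / (π₀ (Z ω) + (1 - π₀ (Z ω)) * Real.exp (I (Z ω))) := by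
  classical
  have hXZ : Measurable fun ω => (X ω, Z ω) := hX.prodMk hZ
  have hG : MeasurableSpace.comap (fun ω => (X ω, Z ω)) inferInstance ≤ mΩ := by
    rintro s ⟨u, hu, rfl⟩; exact hXZ hu
  have hmG : MeasurableSpace.comap Z inferInstance
      ≤ MeasurableSpace.comap (fun ω => (X ω, Z ω)) inferInstance := by
    rintro s ⟨u, hu, rfl⟩
    refine ⟨Set.univ ×ˢ u, MeasurableSet.univ.prod hu, ?_⟩
    ext ω; simp
  set e₁ : Ω → ℝ := fun ω => Real.exp (-(I (Z ω)) - J (Z ω)) with he₁_def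
  set e₂ : Ω → ℝ := fun ω => Real.exp (-(J (Z ω))) with he₂_def
  set g : Ω → ℝ := fun ω => Real.exp (-(X ω * I (Z ω)) - J (Z ω)) with hg_def
  have hZm : Measurable[MeasurableSpace.comap Z inferInstance] Z :=
    Measurable.of_comap_le le_rfl
  have hXG : Measurable[MeasurableSpace.comap (fun ω => (X ω, Z ω)) inferInstance] X := by
    have h : Measurable[MeasurableSpace.comap (fun ω => (X ω, Z ω)) inferInstance]
        fun ω => (X ω, Z ω) := Measurable.of_comap_le le_rfl
    exact measurable_fst.comp h
  have he₁m : StronglyMeasurable[MeasurableSpace.comap Z inferInstance] e₁ :=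
    ((Real.measurable_exp.comp (hI.neg.sub hJ)).comp hZm).stronglyMeasurable
  have he₂m : StronglyMeasurable[MeasurableSpace.comap Z inferInstance] e₂ :=
    ((Real.measurable_exp.comp hJ.neg).comp hZm).stronglyMeasurable
  have hind_int : ∀ (V : Ω → ℝ), Measurable V → Integrable (indGE V t) P := by
    intro V hV
    exact (integrable_const (1:ℝ)).indicator (hV measurableSet_Ici)
  have hind_le : ∀ (V : Ω → ℝ) ω, indGE V t ω ≤ 1 := by
    intro V ω
    simp only [indGE, Set.indicator_apply]
    split <;> norm_num
  have hind_nonneg : ∀ (V : Ω → ℝ) ω, 0 ≤ indGE V t ω := by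
    intro V ω
    simp only [indGE, Set.indicator_apply]
    split <;> norm_num
  have hX_int : Integrable X P := by
    refine Integrable.mono' (integrable_const (1:ℝ)) hX.aestronglyMeasurable ?_
    filter_upwards with ω
    rcases hXbin ω with h | h <;> simp [h]
  have hg_meas : Measurable g :=
    Real.measurable_exp.comp (((hX.mul (hI.comp hZ)).neg).sub (hJ.comp hZ))
  have hg_int : Integrable g P := integrable_condExp.congr hsurv
  have hg_le_one : ∀ᵐ ω ∂P, g ω ≤ 1 := by
    have h1 : P[indGE Tstar t|MeasurableSpace.comap (fun ω => (X ω, Z ω)) inferInstance]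
        ≤ᵐ[P] P[(fun _ => (1:ℝ))|MeasurableSpace.comap (fun ω => (X ω, Z ω)) inferInstance] := by
      refine condExp_mono (hind_int Tstar hTstar) (integrable_const 1) ?_
      filter_upwards with ω using hind_le Tstar ω
    filter_upwards [h1, hsurv] with ω h1 h2
    rw [← h2]
    calc (P[indGE Tstar t|MeasurableSpace.comap (fun ω => (X ω, Z ω)) inferInstance]) ω
        ≤ (P[(fun _ => (1:ℝ))|MeasurableSpace.comap (fun ω => (X ω, Z ω)) inferInstance]) ω := h1
      _ = 1 := by rw [condExp_const hG]
  -- pointwise decompositions using binaryness of X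
  have hgsplit : ∀ ω, g ω = e₁ ω * X ω + e₂ ω * (1 - X ω) := by
    intro ω
    rcases hXbin ω with h | h <;> simp [hg_def, he₁_def, he₂_def, h]
  have hXg : ∀ ω, X ω * g ω = e₁ ω * X ω := by
    intro ω
    rcases hXbin ω with h | h <;> simp [hg_def, he₁_def, h]
  -- integrability of the two pieces
  have hprod1_int : Integrable (fun ω => e₁ ω * X ω) P := by
    refine Integrable.mono' (integrable_const (1:ℝ))
      ((he₁m.mono hm').aestronglyMeasurable.mul hX.aestronglyMeasurable) ?_
    filter_upwards [hg_le_one] with ω hle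
    rw [← hXg ω, Real.norm_eq_abs, abs_mul]
    rcases hXbin ω with h | h
    · simp [h]
    · simp only [h, abs_one, one_mul]
      rw [abs_of_pos (Real.exp_pos _)]
      exact hle
  have hprod2_int : Integrable (fun ω => e₂ ω * (1 - X ω)) P := by
    refine Integrable.mono' (integrable_const (1:ℝ))
      ((he₂m.mono hm').aestronglyMeasurable.mul
        (hX.const_sub 1).aestronglyMeasurable) ?_
    filter_upwards [hg_le_one] with ω hle
    rcases hXbin ω with h | h
    · have : e₂ ω * (1 - X ω) = g ω := by simp [hg_def, he₂_def, h]
      rw [Real.norm_eq_abs, this, abs_of_pos (Real.exp_pos _)]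
      exact hle
    · simp [h]
  -- conditional expectation of g given σ(Z)
  have hcondX : P[X|MeasurableSpace.comap Z inferInstance] =ᵐ[P] fun ω => π₀ (Z ω) :=
    hπ₀eq.symm
  have hpull1 : P[fun ω => e₁ ω * X ω|MeasurableSpace.comap Z inferInstance]
      =ᵐ[P] fun ω => e₁ ω * π₀ (Z ω) := by
    have h := condExp_mul_of_stronglyMeasurable_left (μ := P) he₁m hprod1_int hX_int
    refine h.trans ?_
    filter_upwards [hcondX] with ω hω
    simp only [Pi.mul_apply, hω]
  have hcond1X : P[fun ω => (1:ℝ) - X ω|MeasurableSpace.comap Z inferInstance]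
      =ᵐ[P] fun ω => 1 - π₀ (Z ω) := by
    have h := condExp_sub (μ := P) (m := MeasurableSpace.comap Z inferInstance)
      (integrable_const (1:ℝ)) hX_int
    refine (Filter.EventuallyEq.trans ?_ h).trans ?_
    · rfl
    · filter_upwards [hcondX] with ω hω
      simp only [Pi.sub_apply, hω, condExp_const hm']
  have hpull2 : P[fun ω => e₂ ω * (1 - X ω)|MeasurableSpace.comap Z inferInstance]
      =ᵐ[P] fun ω => e₂ ω * (1 - π₀ (Z ω)) := by
    have hint1X : Integrable (fun ω => (1:ℝ) - X ω) P := (integrable_const 1).sub hX_int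
    have h := condExp_mul_of_stronglyMeasurable_left (μ := P) he₂m hprod2_int hint1X
    refine h.trans ?_
    filter_upwards [hcond1X] with ω hω
    simp only [Pi.mul_apply, hω]
  have hSg : P[g|MeasurableSpace.comap Z inferInstance]
      =ᵐ[P] fun ω => e₁ ω * π₀ (Z ω) + e₂ ω * (1 - π₀ (Z ω)) := by
    have hgeq : g = fun ω => e₁ ω * X ω + e₂ ω * (1 - X ω) := funext hgsplit
    rw [hgeq]
    refine (condExp_add hprod1_int hprod2_int _).trans ?_
    filter_upwards [hpull1, hpull2] with ω h1 h2
    simp only [Pi.add_apply, h1, h2]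
  -- tower property: condexp of survival indicators given σ(Z)
  have hT1 : P[indGE Tstar t|MeasurableSpace.comap Z inferInstance]
      =ᵐ[P] fun ω => e₁ ω * π₀ (Z ω) + e₂ ω * (1 - π₀ (Z ω)) := by
    refine ((condExp_condExp_of_le hmG hG (f := indGE Tstar t)).symm.trans ?_).trans hSg
    exact condExp_congr_ae hsurv
  have hXT_G : P[fun ω => X ω * indGE Tstar t ω|
      MeasurableSpace.comap (fun ω => (X ω, Z ω)) inferInstance]
      =ᵐ[P] fun ω => X ω * (P[indGE Tstar t|
        MeasurableSpace.comap (fun ω => (X ω, Z ω)) inferInstance]) ω := by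
    have hXind_int : Integrable (fun ω => X ω * indGE Tstar t ω) P := by
      refine Integrable.mono' (integrable_const (1:ℝ))
        (hX.aestronglyMeasurable.mul (hind_int Tstar hTstar).aestronglyMeasurable) ?_
      filter_upwards with ω
      rw [Real.norm_eq_abs, abs_mul]
      rcases hXbin ω with h | h
      · simp [h]
      · simp only [h, abs_one, one_mul]
        rw [abs_of_nonneg (hind_nonneg _ ω)]
        exact hind_le _ ω
    exact condExp_mul_of_stronglyMeasurable_left hXG.stronglyMeasurable hXind_int
      (hind_int Tstar hTstar)
  have hXT : P[fun ω => X ω * indGE Tstar t ω|MeasurableSpace.comap Z inferInstance]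
      =ᵐ[P] fun ω => e₁ ω * π₀ (Z ω) := by
    refine ((condExp_condExp_of_le hmG hG
      (f := fun ω => X ω * indGE Tstar t ω)).symm.trans ?_)
    have h2 : P[fun ω => X ω * indGE Tstar t ω|
        MeasurableSpace.comap (fun ω => (X ω, Z ω)) inferInstance]
        =ᵐ[P] fun ω => e₁ ω * X ω := by
      refine hXT_G.trans ?_
      filter_upwards [hsurv] with ω hω
      rw [hω, ← hXg ω]
    exact (condExp_congr_ae h2).trans hpull1
  -- conditional independence factorization
  have hfact := (condIndepFun_iff_condExp_inter_preimage_eq_mul (μ := P)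
    hC (hTstar.prodMk hX)).mp hci
  have e_C : (C ⁻¹' Set.Ici t).indicator (fun _ => (1:ℝ)) = indGE C t := rfl
  have hsetT : ((fun ω => (Tstar ω, X ω)) ⁻¹' (Set.Ici t ×ˢ Set.univ))
      = {ω | t ≤ Tstar ω} := by
    ext ω; simp [Set.mem_prod]
  have e_T : ((fun ω => (Tstar ω, X ω)) ⁻¹' (Set.Ici t ×ˢ Set.univ)).indicator
      (fun _ => (1:ℝ)) = indGE Tstar t := by
    rw [hsetT]; rfl
  have hsetmin : C ⁻¹' Set.Ici t ∩ (fun ω => (Tstar ω, X ω)) ⁻¹'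
      (Set.Ici t ×ˢ Set.univ) = {ω | t ≤ min (Tstar ω) (C ω)} := by
    ext ω; simp [Set.mem_prod, le_min_iff, and_comm]
  have e_min : (C ⁻¹' Set.Ici t ∩ (fun ω => (Tstar ω, X ω)) ⁻¹'
      (Set.Ici t ×ˢ Set.univ)).indicator (fun _ => (1:ℝ))
      = indGE (fun ω' => min (Tstar ω') (C ω')) t := by
    rw [hsetmin]; rfl
  have e_XT : ((fun ω => (Tstar ω, X ω)) ⁻¹' (Set.Ici t ×ˢ ({1} : Set ℝ))).indicator
      (fun _ => (1:ℝ)) = fun ω => X ω * indGE Tstar t ω := by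
    funext ω
    simp only [Set.indicator_apply, Set.mem_preimage, Set.mem_prod, Set.mem_Ici,
      Set.mem_singleton_iff, indGE, Set.mem_setOf_eq]
    rcases hXbin ω with h | h <;> by_cases ht : t ≤ Tstar ω <;> simp [h, ht]
  have e_Xmin : (C ⁻¹' Set.Ici t ∩ (fun ω => (Tstar ω, X ω)) ⁻¹'
      (Set.Ici t ×ˢ ({1} : Set ℝ))).indicator (fun _ => (1:ℝ))
      = fun ω' => X ω' * indGE (fun ω'' => min (Tstar ω'') (C ω'')) t ω' := by
    funext ω
    simp only [Set.indicator_apply, Set.mem_inter_iff, Set.mem_preimage, Set.mem_Ici,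
      Set.mem_prod, Set.mem_singleton_iff, indGE, Set.mem_setOf_eq, le_min_iff]
    rcases hXbin ω with h | h <;> by_cases ht : t ≤ Tstar ω <;>
      by_cases hc : t ≤ C ω <;> simp [h, ht, hc]
  have key1 := hfact (Set.Ici t) (Set.Ici t ×ˢ Set.univ) measurableSet_Ici
    (measurableSet_Ici.prod MeasurableSet.univ)
  rw [e_min, e_T, e_C] at key1
  have key2 := hfact (Set.Ici t) (Set.Ici t ×ˢ ({1} : Set ℝ)) measurableSet_Ici
    (measurableSet_Ici.prod (measurableSet_singleton 1))
  rw [e_Xmin, e_XT, e_C] at key2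
  -- bounds on π₀
  have hπ_nonneg : ∀ᵐ ω ∂P, 0 ≤ π₀ (Z ω) := by
    have h := condExp_nonneg (m := MeasurableSpace.comap Z inferInstance) (μ := P)
      (f := X) ?_
    · filter_upwards [h, hπ₀eq] with ω h1 h2
      rw [h2]; exact h1
    · filter_upwards with ω
      rcases hXbin ω with h | h <;> simp [h]
  have hπ_le_one : ∀ᵐ ω ∂P, π₀ (Z ω) ≤ 1 := by
    have h := condExp_mono (m := MeasurableSpace.comap Z inferInstance) (μ := P)
      hX_int (integrable_const (1:ℝ)) ?_
    · filter_upwards [h, hπ₀eq] with ω h1 h2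
      rw [h2]
      calc (P[X|MeasurableSpace.comap Z inferInstance]) ω
          ≤ (P[(fun _ => (1:ℝ))|MeasurableSpace.comap Z inferInstance]) ω := h1
        _ = 1 := by rw [condExp_const hm']
    · filter_upwards with ω
      rcases hXbin ω with h | h <;> simp [h]
  -- final combination
  filter_upwards [key1, key2, hT1, hXT, hcens, hπ_nonneg, hπ_le_one] with ω hk1 hk2
    hT1ω hXTω hAω hπ0 hπ1
  set π := π₀ (Z ω)
  set A := (P[indGE C t|MeasurableSpace.comap Z inferInstance]) ω
  have he₂e₁ : e₂ ω = e₁ ω * Real.exp (I (Z ω)) := by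
    simp only [he₁_def, he₂_def, ← Real.exp_add]
    ring_nf
  have hSpos : 0 < e₁ ω * π + e₂ ω * (1 - π) := by
    rcases eq_or_lt_of_le hπ0 with h | h
    · rw [← h]; simpa using Real.exp_pos _
    · exact add_pos_of_pos_of_nonneg (mul_pos (Real.exp_pos _) h)
        (mul_nonneg (Real.exp_pos _).le (by linarith))
  have hDpos : 0 < (P[indGE (fun ω' => min (Tstar ω') (C ω')) t|
      MeasurableSpace.comap Z inferInstance]) ω := by
    rw [hk1, hT1ω]
    exact mul_pos hAω hSpos
  refine ⟨hDpos, ?_⟩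
  rw [hk1, hk2, hT1ω, hXTω]
  have hRpos : 0 < π + (1 - π) * Real.exp (I (Z ω)) := by
    rcases eq_or_lt_of_le hπ0 with h | h
    · rw [← h]; simpa using Real.exp_pos _
    · exact add_pos_of_pos_of_nonneg h
        (mul_nonneg (by linarith) (Real.exp_pos _).le)
  rw [div_eq_div_iff (by positivity) (by positivity)]
  rw [he₂e₁]
  ring
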